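/- Let n ≥ 2, m_* < m < 1, let a ∈ ℝⁿ be nonzero, let φ(y) := A·(|a|·|y| + a·y)^{−1/(1−m)} on ℝⁿ \ {−τ a/|a| : τ ≥ 0}, and let 0 < γ < 1. Then φ⁻ := (1−γ)·φ satisfies Δ((φ⁻)ᵐ)(y) + a·∇φ⁻(y) = ((1−γ)ᵐ − (1−γ))·Δ(φᵐ)(y) ≥ 0 at every point y of this set; that is, φ⁻ is a (stationary) subsolution of ∂ₜv = Δ(vᵐ) + a·∇v. -/

import Mathlib

open scoped RealInnerProductSpace
open Set

/-- The Laplacian of `f : ℝⁿ → ℝ`: the sum of the second derivatives along the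
standard orthonormal coordinate directions. -/
noncomputable def lap {n : ℕ} (f : EuclideanSpace ℝ (Fin n) → ℝ)
    (x : EuclideanSpace ℝ (Fin n)) : ℝ :=
  ∑ i : Fin n, iteratedFDeriv ℝ 2 f x ![EuclideanSpace.single i 1, EuclideanSpace.single i 1]

/-- `m_* = 0` if `n = 2` and `(n-3)/(n-1)` if `n ≥ 3`. -/
noncomputable def mstar (n : ℕ) : ℝ := if n = 2 then 0 else ((n : ℝ) - 3) / ((n : ℝ) - 1)

section Aux
variable {E : Type*} [NormedAddCommGroup E] [InnerProductSpace ℝ E]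

lemma hasFDerivAt_norm' {y : E} (hy : y ≠ 0) :
    HasFDerivAt (fun z : E => ‖z‖) (‖y‖⁻¹ • (innerSL ℝ y : E →L[ℝ] ℝ)) y := by
  have h1 : HasFDerivAt (fun z : E => ⟪z, z⟫) ((2:ℝ) • (innerSL ℝ y : E →L[ℝ] ℝ)) y := by
    have h := (hasFDerivAt_id (𝕜 := ℝ) y).inner ℝ (hasFDerivAt_id y)
    refine h.congr_fderiv ?_
    ext v
    simp [real_inner_comm, two_mul]
  have h2 : HasDerivAt Real.sqrt (1 / (2 * Real.sqrt ⟪y, y⟫)) ⟪y, y⟫ :=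
    Real.hasDerivAt_sqrt (by
      rw [real_inner_self_eq_norm_mul_norm]
      exact (mul_pos (norm_pos_iff.2 hy) (norm_pos_iff.2 hy)).ne')
  have h3 := HasDerivAt.comp_hasFDerivAt (f := fun z : E => ⟪z, z⟫) y h2 h1
  have hfun : (Real.sqrt ∘ fun z : E => ⟪z, z⟫) = fun z : E => ‖z‖ := by
    funext z
    simp only [Function.comp_apply]
    rw [real_inner_self_eq_norm_mul_norm, Real.sqrt_mul_self (norm_nonneg z)]
  rw [hfun] at h3
  refine h3.congr_fderiv ?_
  have hr : Real.sqrt ⟪y, y⟫ = ‖y‖ := by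
    rw [real_inner_self_eq_norm_mul_norm, Real.sqrt_mul_self (norm_nonneg y)]
  rw [hr, smul_smul]
  congr 1
  have : ‖y‖ ≠ 0 := norm_ne_zero_iff.2 hy
  field_simp

noncomputable def duE (a z : E) : E →L[ℝ] ℝ :=
  (‖a‖ * ‖z‖⁻¹) • (innerSL ℝ z : E →L[ℝ] ℝ) + innerSL ℝ a

lemma duE_apply (a z w : E) : duE a z w = ‖a‖ * ‖z‖⁻¹ * ⟪z, w⟫ + ⟪a, w⟫ := by
  simp [duE, mul_assoc]

lemma hasFDerivAt_u (a : E) {y : E} (hy : y ≠ 0) :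
    HasFDerivAt (fun z : E => ‖a‖ * ‖z‖ + ⟪a, z⟫) (duE a y) y := by
  have h1 := (hasFDerivAt_norm' hy).const_mul ‖a‖
  have h2 : HasFDerivAt (fun z : E => ⟪a, z⟫) (innerSL ℝ a : E →L[ℝ] ℝ) y := by
    have := (innerSL ℝ a : E →L[ℝ] ℝ).hasFDerivAt (x := y)
    exact this
  have := h1.add h2
  refine this.congr_fderiv ?_
  rw [duE, smul_smul]

lemma hasFDerivAt_cupow (a : E) {y : E} (c p : ℝ) (hy : y ≠ 0)
    (hu : 0 < ‖a‖ * ‖y‖ + ⟪a, y⟫) :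
    HasFDerivAt (fun z : E => c * (‖a‖ * ‖z‖ + ⟪a, z⟫) ^ p)
      ((c * p * (‖a‖ * ‖y‖ + ⟪a, y⟫) ^ (p - 1)) • duE a y) y := by
  have h := (Real.hasDerivAt_rpow_const (p := p) (Or.inl hu.ne')).comp_hasFDerivAt y
    (hasFDerivAt_u a hy)
  have h2 := h.const_mul c
  refine h2.congr_fderiv ?_
  rw [smul_smul]
  ring_nf

lemma upos_of_not_ray {a y : E} (ha : a ≠ 0)
    (hy : ¬ ∃ τ : ℝ, 0 ≤ τ ∧ y = -(τ • (‖a‖⁻¹ • a))) :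
    y ≠ 0 ∧ 0 < ‖a‖ * ‖y‖ + ⟪a, y⟫ := by
  have hk : (0:ℝ) < ‖a‖ := norm_pos_iff.2 ha
  have hy0 : y ≠ 0 := by
    rintro rfl
    exact hy ⟨0, le_rfl, by simp⟩
  refine ⟨hy0, ?_⟩
  have h1 : |⟪a, y⟫| ≤ ‖a‖ * ‖y‖ := abs_real_inner_le_norm a y
  have h2 : 0 ≤ ‖a‖ * ‖y‖ + ⟪a, y⟫ := by
    rcases abs_le.1 h1 with ⟨h1a, _⟩; linarith
  rcases h2.lt_or_eq with h | h
  · exact h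
  · exfalso
    set v : E := ‖y‖ • a + ‖a‖ • y with hv
    have hvv : ⟪v, v⟫ = 2 * ‖a‖ * ‖y‖ * (‖a‖ * ‖y‖ + ⟪a, y⟫) := by
      rw [hv, real_inner_add_add_self]
      rw [real_inner_smul_left, real_inner_smul_right, real_inner_smul_left,
        real_inner_smul_right, real_inner_smul_left, real_inner_smul_right,
        real_inner_self_eq_norm_mul_norm, real_inner_self_eq_norm_mul_norm]
      ring
    have hv0 : v = 0 := by
      rw [← inner_self_eq_zero (𝕜 := ℝ), hvv, ← h]
      ring
    have hyy : y = -(‖y‖ • (‖a‖⁻¹ • a)) := by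
      have h3 : ‖a‖ • y = -(‖y‖ • a) := by
        rw [hv] at hv0
        rw [eq_neg_iff_add_eq_zero, add_comm]
        exact hv0
      have h4 : y = ‖a‖⁻¹ • (‖a‖ • y) := (inv_smul_smul₀ hk.ne' y).symm
      rw [h3, smul_neg, smul_comm] at h4
      exact h4
    exact hy ⟨‖y‖, norm_nonneg y, hyy⟩

end Aux

lemma lap_cupow (n : ℕ) (a y : EuclideanSpace ℝ (Fin n)) (c p : ℝ) (hy : y ≠ 0)
    (hu : 0 < ‖a‖ * ‖y‖ + ⟪a, y⟫) :
    lap (fun z => c * (‖a‖ * ‖z‖ + ⟪a, z⟫) ^ p) y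
      = c * p * ‖a‖ * (‖a‖ * ‖y‖ + ⟪a, y⟫) ^ (p - 1) * ‖y‖⁻¹
          * (2 * (p - 1) + ((n : ℝ) - 1)) := by
  classical
  set u : EuclideanSpace ℝ (Fin n) → ℝ := fun z => ‖a‖ * ‖z‖ + ⟪a, z⟫ with hu_def
  set F : EuclideanSpace ℝ (Fin n) → ℝ := fun z => c * u z ^ p with hF_def
  have hucont : Continuous u := by
    exact (continuous_const.mul continuous_norm).add
      (Continuous.inner continuous_const continuous_id)
  have hO : IsOpen {z : EuclideanSpace ℝ (Fin n) | 0 < u z} := isOpen_lt continuous_const hucont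
  have hmem : {z : EuclideanSpace ℝ (Fin n) | 0 < u z} ∈ nhds y := hO.mem_nhds hu
  have hne : ∀ z : EuclideanSpace ℝ (Fin n), 0 < u z → z ≠ 0 := by
    intro z hz h0
    rw [h0] at hz
    simp [hu_def] at hz
  have hu_cd : ContDiffAt ℝ 2 u y := by
    exact (contDiffAt_const.mul ((contDiffAt_norm ℝ hy))).add
      (ContDiffAt.inner ℝ contDiffAt_const contDiffAt_id)
  have hF_cd : ContDiffAt ℝ 2 F y :=
    contDiffAt_const.mul ((Real.contDiffAt_rpow_const_of_ne hu.ne').comp (g := fun x => x ^ p) y hu_cd)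
  have hdiff : DifferentiableAt ℝ (fderiv ℝ F) y := by
    have := hF_cd.fderiv_right (m := 1) (by norm_num)
    exact this.differentiableAt one_ne_zero
  have hderiv : ∀ z : EuclideanSpace ℝ (Fin n), 0 < u z →
      fderiv ℝ F z = (c * p * u z ^ (p - 1)) • duE a z :=
    fun z hz => (hasFDerivAt_cupow a c p (hne z hz) hz).fderiv
  have main : ∀ w : EuclideanSpace ℝ (Fin n), fderiv ℝ (fderiv ℝ F) y w w =
      (c * p * (p - 1) * u y ^ (p - 1 - 1)) * (‖a‖ * ‖y‖⁻¹ * ⟪y, w⟫ + ⟪a, w⟫) ^ 2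
      + (c * p * u y ^ (p - 1)) *
        (‖a‖ * ((-(‖y‖ ^ 2)⁻¹ * (‖y‖⁻¹ * ⟪y, w⟫)) * ⟪y, w⟫ + ‖y‖⁻¹ * ⟪w, w⟫)) := by
    intro w
    have e1 : fderiv ℝ (fun z => fderiv ℝ F z w) y = (fderiv ℝ (fderiv ℝ F) y).flip w := by
      rw [fderiv_clm_apply hdiff (differentiableAt_const w)]
      simp
    have e2 : fderiv ℝ (fderiv ℝ F) y w w = fderiv ℝ (fun z => fderiv ℝ F z w) y w := by
      rw [e1]; rfl
    rw [e2]
    have hev : (fun z => fderiv ℝ F z w)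
        =ᶠ[nhds y] fun z => (c * p * u z ^ (p - 1)) * (‖a‖ * (‖z‖⁻¹ * ⟪z, w⟫) + ⟪a, w⟫) := by
      filter_upwards [hmem] with z hz
      rw [hderiv z hz]
      simp only [ContinuousLinearMap.smul_apply, duE_apply, smul_eq_mul]
      ring
    rw [hev.fderiv_eq]
    have hs : HasFDerivAt (fun z : EuclideanSpace ℝ (Fin n) => c * p * u z ^ (p - 1))
        ((c * p * (p - 1) * u y ^ (p - 1 - 1)) • duE a y) y := by
      exact hasFDerivAt_cupow a (c * p) (p - 1) hy hu
    have hinv : HasFDerivAt (fun z : EuclideanSpace ℝ (Fin n) => ‖z‖⁻¹)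
        ((-(‖y‖ ^ 2)⁻¹) • (‖y‖⁻¹ • (innerSL ℝ y : EuclideanSpace ℝ (Fin n) →L[ℝ] ℝ))) y := by
      exact HasDerivAt.comp_hasFDerivAt (f := fun z : EuclideanSpace ℝ (Fin n) => ‖z‖) y
        (hasDerivAt_inv (norm_ne_zero_iff.2 hy)) (hasFDerivAt_norm' hy)
    have hzw : HasFDerivAt (fun z : EuclideanSpace ℝ (Fin n) => ⟪z, w⟫)
        (innerSL ℝ w : EuclideanSpace ℝ (Fin n) →L[ℝ] ℝ) y := by
      have hcomm : (fun z : EuclideanSpace ℝ (Fin n) => ⟪z, w⟫)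
          = fun z : EuclideanSpace ℝ (Fin n) => ⟪w, z⟫ :=
        funext fun z => real_inner_comm _ _
      rw [hcomm]
      have := (innerSL ℝ w : EuclideanSpace ℝ (Fin n) →L[ℝ] ℝ).hasFDerivAt (x := y)
      exact this
    have hh := ((hinv.mul hzw).const_mul ‖a‖).add_const (⟪a, w⟫ : ℝ)
    have hG := hs.mul hh
    rw [HasFDerivAt.fderiv (f := fun z => c * p * u z ^ (p - 1) * (‖a‖ * (‖z‖⁻¹ * ⟪z, w⟫) + ⟪a, w⟫)) hG]
    simp only [ContinuousLinearMap.add_apply, ContinuousLinearMap.smul_apply,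
      ContinuousLinearMap.coe_smul', Pi.smul_apply, Pi.mul_apply, duE_apply, innerSL_apply_apply, smul_eq_mul]
    ring
  have coordsy : ∀ i : Fin n, (⟪y, EuclideanSpace.single i (1:ℝ)⟫ : ℝ) = y i := by
    intro i; simp [EuclideanSpace.inner_single_right]
  have coordsa : ∀ i : Fin n, (⟪a, EuclideanSpace.single i (1:ℝ)⟫ : ℝ) = a i := by
    intro i; simp [EuclideanSpace.inner_single_right]
  have coordse : ∀ i : Fin n,
      (⟪(EuclideanSpace.single i (1:ℝ) : EuclideanSpace ℝ (Fin n)),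
        EuclideanSpace.single i (1:ℝ)⟫ : ℝ) = 1 := by
    intro i; simp [EuclideanSpace.inner_single_right, EuclideanSpace.single_apply]
  have hinner : ∀ v w : EuclideanSpace ℝ (Fin n), (⟪v, w⟫ : ℝ) = ∑ i : Fin n, v i * w i := by
    intro v w
    simp [PiLp.inner_apply, RCLike.inner_apply, mul_comm]
  have hS1 : ∑ i : Fin n, y i * y i = ‖y‖ * ‖y‖ := by
    rw [← hinner y y, real_inner_self_eq_norm_mul_norm]
  have hS2 : ∑ i : Fin n, y i * a i = ⟪a, y⟫ := by
    rw [← hinner y a, real_inner_comm]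
  have hS3 : ∑ i : Fin n, a i * a i = ‖a‖ * ‖a‖ := by
    rw [← hinner a a, real_inner_self_eq_norm_mul_norm]
  have hlap : lap F y = ∑ i : Fin n,
      ((c * p * (p - 1) * u y ^ (p - 1 - 1)) * (‖a‖ * ‖y‖⁻¹ * y i + a i) ^ 2
      + (c * p * u y ^ (p - 1)) *
        (‖a‖ * ((-(‖y‖ ^ 2)⁻¹ * (‖y‖⁻¹ * y i)) * y i + ‖y‖⁻¹ * 1))) := by
    unfold lap
    refine Finset.sum_congr rfl fun i _ => ?_
    rw [iteratedFDeriv_two_apply]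
    simp only [Matrix.cons_val_zero, Matrix.cons_val_one, Matrix.head_cons]
    rw [main (EuclideanSpace.single i (1:ℝ))]
    rw [coordsy i, coordsa i, coordse i]
  rw [hlap]
  have hr : (‖y‖ : ℝ) ≠ 0 := norm_ne_zero_iff.2 hy
  have hU : u y ^ (p - 1) = u y ^ (p - 1 - 1) * u y := by
    rw [← Real.rpow_add_one hu.ne' (p - 1 - 1)]
    ring_nf
    rfl
  have huy : u y = ‖a‖ * ‖y‖ + ⟪a, y⟫ := rfl
  have expand : ∀ i : Fin n,
      ((c * p * (p - 1) * u y ^ (p - 1 - 1)) * (‖a‖ * ‖y‖⁻¹ * y i + a i) ^ 2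
      + (c * p * u y ^ (p - 1)) *
        (‖a‖ * ((-(‖y‖ ^ 2)⁻¹ * (‖y‖⁻¹ * y i)) * y i + ‖y‖⁻¹ * 1)))
      = (c * p * (p - 1) * u y ^ (p - 1 - 1)) * (‖a‖ * ‖y‖⁻¹ * (‖a‖ * ‖y‖⁻¹)) * (y i * y i)
        + (c * p * (p - 1) * u y ^ (p - 1 - 1)) * (2 * (‖a‖ * ‖y‖⁻¹)) * (y i * a i)
        + (c * p * (p - 1) * u y ^ (p - 1 - 1)) * (a i * a i)
        + (c * p * u y ^ (p - 1)) * (-(‖a‖ * (‖y‖ ^ 2)⁻¹ * ‖y‖⁻¹)) * (y i * y i)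
        + (c * p * u y ^ (p - 1)) * (‖a‖ * ‖y‖⁻¹) := by
    intro i; ring
  rw [Finset.sum_congr rfl fun i _ => expand i]
  simp only [Finset.sum_add_distrib, ← Finset.mul_sum, Finset.sum_const, Finset.card_univ,
    Fintype.card_fin, nsmul_eq_mul]
  rw [hS1, hS2, hS3, hU, huy]
  field_simp
  ring

lemma m_facts (n : ℕ) (hn : 2 ≤ n) (m : ℝ) (hm : mstar n < m) (hm1 : m < 1) :
    0 < m ∧ 0 < ((n:ℝ) - 1) * m - ((n:ℝ) - 3) := by
  unfold mstar at hm
  split_ifs at hm with h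
  · subst h
    exact ⟨hm, by push_cast; linarith⟩
  · have hn3 : 3 ≤ n := by omega
    have hc : (3:ℝ) ≤ (n:ℝ) := by exact_mod_cast hn3
    have hpos : (0:ℝ) < (n:ℝ) - 1 := by linarith
    have hdiv : ((n:ℝ) - 3) < m * ((n:ℝ) - 1) := by
      rw [div_lt_iff₀ hpos] at hm; linarith [hm]
    have hm0 : 0 < m := by
      have h0 : (0:ℝ) ≤ ((n:ℝ) - 3) / ((n:ℝ) - 1) := div_nonneg (by linarith) (by linarith)
      linarith
    exact ⟨hm0, by linarith⟩

theorem stmt_5 (n : ℕ) (hn : 2 ≤ n) (m : ℝ) (hm : mstar n < m) (hm1 : m < 1)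
    (a : EuclideanSpace ℝ (Fin n)) (ha : a ≠ 0)
    (A : ℝ)
    (hA : A = (((n : ℝ) - 1) * m / (1 - m) * (m - ((n : ℝ) - 3) / ((n : ℝ) - 1)))
        ^ ((1 : ℝ) / (1 - m)))
    (φ : EuclideanSpace ℝ (Fin n) → ℝ)
    (hφ : ∀ y, φ y = A * (‖a‖ * ‖y‖ + ⟪a, y⟫) ^ (-(1 / (1 - m))))
    (S : Set (EuclideanSpace ℝ (Fin n)))
    (hS : S = {y | ¬ ∃ τ : ℝ, 0 ≤ τ ∧ y = -(τ • (‖a‖⁻¹ • a))})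
    (γ : ℝ) (hγ0 : 0 < γ) (hγ1 : γ < 1)
    (ψ : EuclideanSpace ℝ (Fin n) → ℝ)
    (hψ : ∀ y, ψ y = (1 - γ) * φ y) :
    ∀ y ∈ S,
      lap (fun z => ψ z ^ m) y + ⟪a, gradient ψ y⟫
        = ((1 - γ) ^ m - (1 - γ)) * lap (fun z => φ z ^ m) y ∧
      lap (fun z => ψ z ^ m) y + ⟪a, gradient ψ y⟫ ≥ 0 := by
  intro y hy
  rw [hS, mem_setOf_eq] at hy
  obtain ⟨hy0, hu⟩ := upos_of_not_ray ha hy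
  obtain ⟨hm0, hkey⟩ := m_facts n hn m hm hm1
  have h1m : (0:ℝ) < 1 - m := by linarith
  have hk : (0:ℝ) < ‖a‖ := norm_pos_iff.2 ha
  have hr : (0:ℝ) < ‖y‖ := norm_pos_iff.2 hy0
  have hγ : (0:ℝ) < 1 - γ := by linarith
  have hn2 : (2:ℝ) ≤ (n:ℝ) := by exact_mod_cast hn
  have hn1 : ((n:ℝ) - 1) ≠ 0 := by linarith
  set q : ℝ := -(1 / (1 - m)) with hq
  set P : ℝ := -(1 / (1 - m)) * m with hP
  have hP1 : P - 1 = q := by rw [hP, hq]; field_simp; ring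
  set B : ℝ := ((n : ℝ) - 1) * m / (1 - m) * (m - ((n : ℝ) - 3) / ((n : ℝ) - 1)) with hB
  have hBeq : B = m * (((n:ℝ) - 1) * m - ((n:ℝ) - 3)) / (1 - m) := by
    rw [hB]; field_simp
  have hBpos : 0 < B := by
    rw [hBeq]; exact div_pos (mul_pos hm0 hkey) h1m
  have hApos : 0 < A := by rw [hA]; exact Real.rpow_pos_of_pos hBpos _
  have hA1m : A ^ (1 - m) = B := by
    rw [hA, ← Real.rpow_mul hBpos.le, one_div, inv_mul_cancel₀ h1m.ne', Real.rpow_one]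
  have hAsplit : A = A ^ m * B := by
    have hms : m + (1 - m) = 1 := by ring
    rw [← hA1m, ← Real.rpow_add hApos, hms, Real.rpow_one]
  have hu0 : ∀ z : EuclideanSpace ℝ (Fin n), 0 ≤ ‖a‖ * ‖z‖ + ⟪a, z⟫ := by
    intro z
    have h1 := abs_real_inner_le_norm a z
    rcases abs_le.1 h1 with ⟨h1a, _⟩; linarith
  -- rewrite the functions
  have hφm : (fun z => φ z ^ m)
      = fun z : EuclideanSpace ℝ (Fin n) => (A ^ m) * (‖a‖ * ‖z‖ + ⟪a, z⟫) ^ P := by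
    funext z
    rw [hφ z, Real.mul_rpow hApos.le (Real.rpow_nonneg (hu0 z) _),
      ← Real.rpow_mul (hu0 z), hP]
  have hψm : (fun z => ψ z ^ m)
      = fun z : EuclideanSpace ℝ (Fin n) => ((1 - γ) ^ m * A ^ m) * (‖a‖ * ‖z‖ + ⟪a, z⟫) ^ P := by
    funext z
    rw [hψ z, hφ z,
      Real.mul_rpow hγ.le (mul_nonneg hApos.le (Real.rpow_nonneg (hu0 z) _)),
      Real.mul_rpow hApos.le (Real.rpow_nonneg (hu0 z) _),
      ← Real.rpow_mul (hu0 z), hP, mul_assoc]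
  have hψf : ψ = fun z : EuclideanSpace ℝ (Fin n) =>
      ((1 - γ) * A) * (‖a‖ * ‖z‖ + ⟪a, z⟫) ^ q := by
    funext z
    rw [hψ z, hφ z, hq, mul_assoc]
  -- laplacians
  have hlapφ : lap (fun z => φ z ^ m) y
      = A ^ m * P * ‖a‖ * (‖a‖ * ‖y‖ + ⟪a, y⟫) ^ (P - 1) * ‖y‖⁻¹
          * (2 * (P - 1) + ((n : ℝ) - 1)) := by
    rw [hφm]; exact lap_cupow n a y (A ^ m) P hy0 hu
  have hlapψ : lap (fun z => ψ z ^ m) y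
      = ((1 - γ) ^ m * A ^ m) * P * ‖a‖ * (‖a‖ * ‖y‖ + ⟪a, y⟫) ^ (P - 1) * ‖y‖⁻¹
          * (2 * (P - 1) + ((n : ℝ) - 1)) := by
    rw [hψm]; exact lap_cupow n a y ((1 - γ) ^ m * A ^ m) P hy0 hu
  -- gradient term
  have hgrad : ⟪a, gradient ψ y⟫ = fderiv ℝ ψ y a := by
    rw [real_inner_comm]
    exact InnerProductSpace.toDual_symm_apply
  have hfd : fderiv ℝ ψ y
      = (((1 - γ) * A) * q * (‖a‖ * ‖y‖ + ⟪a, y⟫) ^ (q - 1)) • duE a y := by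
    rw [hψf]
    exact (hasFDerivAt_cupow a ((1 - γ) * A) q hy0 hu).fderiv
  have hval : ⟪a, gradient ψ y⟫
      = (1 - γ) * A * q * ((‖a‖ * ‖y‖ + ⟪a, y⟫) ^ (q - 1))
          * (‖a‖ * ‖y‖⁻¹ * (‖a‖ * ‖y‖ + ⟪a, y⟫)) := by
    rw [hgrad, hfd]
    simp only [ContinuousLinearMap.smul_apply, duE_apply, smul_eq_mul]
    rw [real_inner_comm y a, real_inner_self_eq_norm_mul_norm]
    have hrr : ‖y‖⁻¹ * ‖y‖ = 1 := inv_mul_cancel₀ hr.ne'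
    linear_combination (-((1 - γ) * A * q * (‖a‖ * ‖y‖ + ⟪y, a⟫) ^ (q - 1) * ‖a‖ * ‖a‖)) * hrr
  -- key scalar identity
  have KF : A ^ m * P * (2 * (P - 1) + ((n : ℝ) - 1)) = -(A * q) := by
    rw [hP1]
    nth_rewrite 2 [hAsplit]
    rw [hBeq, hP, hq]
    field_simp
    ring
  have hUq : (‖a‖ * ‖y‖ + ⟪a, y⟫) ^ q
      = (‖a‖ * ‖y‖ + ⟪a, y⟫) ^ (q - 1) * (‖a‖ * ‖y‖ + ⟪a, y⟫) := by
    rw [← Real.rpow_add_one hu.ne' (q - 1)]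
    ring_nf
  have heq : lap (fun z => ψ z ^ m) y + ⟪a, gradient ψ y⟫
      = ((1 - γ) ^ m - (1 - γ)) * lap (fun z => φ z ^ m) y := by
    rw [hlapψ, hlapφ, hval, hP1, hUq]
    simp only [hq, hP] at KF ⊢
    have h1minv : (1 - m) * (1 - m)⁻¹ = 1 := mul_inv_cancel₀ h1m.ne'
    linear_combination ((1 - γ) * ‖a‖ * ((‖a‖ * ‖y‖ + ⟪a, y⟫) ^ (-(1 / (1 - m)) - 1))
      * (‖a‖ * ‖y‖ + ⟪a, y⟫) * ‖y‖⁻¹) * KF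
      + (2 * A ^ m * m * ‖a‖ * ((‖a‖ * ‖y‖ + ⟪a, y⟫) ^ (-(1 / (1 - m)) - 1))
        * (‖a‖ * ‖y‖ + ⟪a, y⟫) * ‖y‖⁻¹ * (1 - γ) * (1 - m)⁻¹) * h1minv
  refine ⟨heq, ?_⟩
  rw [ge_iff_le, heq]
  have hγm : 0 ≤ (1 - γ) ^ m - (1 - γ) := by
    have h2 := Real.rpow_le_rpow_of_exponent_ge hγ (by linarith) hm1.le
    rw [Real.rpow_one] at h2
    linarith
  have hPM : 0 < P * (2 * (P - 1) + ((n : ℝ) - 1)) := by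
    have hPMeq : P * (2 * (P - 1) + ((n : ℝ) - 1))
        = m * (((n:ℝ) - 1) * m - ((n:ℝ) - 3)) / ((1 - m) * (1 - m)) := by
      rw [hP]
      field_simp
      ring
    rw [hPMeq]
    exact div_pos (mul_pos hm0 hkey) (mul_pos h1m h1m)
  have hlapφpos : 0 < lap (fun z => φ z ^ m) y := by
    rw [hlapφ]
    have e : A ^ m * P * ‖a‖ * (‖a‖ * ‖y‖ + ⟪a, y⟫) ^ (P - 1) * ‖y‖⁻¹
          * (2 * (P - 1) + ((n : ℝ) - 1))
        = (A ^ m) * (P * (2 * (P - 1) + ((n : ℝ) - 1)))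
          * (‖a‖ * ((‖a‖ * ‖y‖ + ⟪a, y⟫) ^ (P - 1) * ‖y‖⁻¹)) := by ring
    rw [e]
    exact mul_pos (mul_pos (Real.rpow_pos_of_pos hApos m) hPM)
      (mul_pos hk (mul_pos (Real.rpow_pos_of_pos hu _) (inv_pos.2 hr)))
  exact mul_nonneg hγm hlapφpos.le
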